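/- Lower bound for the pressure: liminf_{N→∞} p_N ≥ sup_{(μ1,μ2) ∈ [−1,1]²} p_LOW(μ1, μ2). -/

import Mathlib

open Real Filter Finset


open Real Filter

noncomputable def spin (b : Bool) : ℝ := if b then 1 else -1

/-- The Hamiltonian of the bipartite mean field model: the first `N1` sites form
block `A`, the remaining `N2` sites form block `B`. -/
noncomputable def ham (J11 J12 J22 h1 h2 : ℝ) (N1 N2 : ℕ)
    (σ : Fin (N1 + N2) → Bool) : ℝ :=
  -(1 / (2 * ((N1 + N2 : ℕ) : ℝ))) *
      (J11 * ∑ i : Fin (N1 + N2), ∑ j : Fin (N1 + N2),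
          (if (i : ℕ) < N1 ∧ (j : ℕ) < N1 then spin (σ i) * spin (σ j) else 0)
        + 2 * J12 * ∑ i : Fin (N1 + N2), ∑ j : Fin (N1 + N2),
          (if (i : ℕ) < N1 ∧ N1 ≤ (j : ℕ) then spin (σ i) * spin (σ j) else 0)
        + J22 * ∑ i : Fin (N1 + N2), ∑ j : Fin (N1 + N2),
          (if N1 ≤ (i : ℕ) ∧ N1 ≤ (j : ℕ) then spin (σ i) * spin (σ j) else 0))
    - h1 * ∑ i : Fin (N1 + N2), (if (i : ℕ) < N1 then spin (σ i) else 0)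
    - h2 * ∑ i : Fin (N1 + N2), (if N1 ≤ (i : ℕ) then spin (σ i) else 0)

/-- The pressure per particle `p_N = (1/N) log Σ_σ exp(-H_N(σ))`. -/
noncomputable def pressure (J11 J12 J22 h1 h2 : ℝ) (N1 N2 : ℕ) : ℝ :=
  (1 / ((N1 + N2 : ℕ) : ℝ)) *
    Real.log (∑ σ : Fin (N1 + N2) → Bool,
      Real.exp (-(ham J11 J12 J22 h1 h2 N1 N2 σ)))

/-- Binary entropy term; `Real.log 0 = 0` gives the continuous extension `I(±1) = 0`. -/
noncomputable def entI (μ : ℝ) : ℝ :=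
  -((1 + μ) / 2) * Real.log ((1 + μ) / 2) - ((1 - μ) / 2) * Real.log ((1 - μ) / 2)

/-- The lower-bound variational functional `p_LOW`. -/
noncomputable def pLOW (J11 J12 J22 h1 h2 α μ1 μ2 : ℝ) : ℝ :=
  (1 / 2) * (J11 * α ^ 2 * μ1 ^ 2 + 2 * J12 * α * (1 - α) * μ1 * μ2
      + J22 * (1 - α) ^ 2 * μ2 ^ 2)
    + α * h1 * μ1 + (1 - α) * h2 * μ2 + α * entI μ1 + (1 - α) * entI μ2


private lemma sum_prod_pi_bool : ∀ (n : ℕ) (f : Fin n → Bool → ℝ),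
    ∑ σ : Fin n → Bool, ∏ i, f i (σ i) = ∏ i, (f i true + f i false) := by
  intro n
  induction n with
  | zero => intro f; simp
  | succ n ih =>
    intro f
    rw [← (Fin.consEquiv (fun _ : Fin (n+1) => Bool)).sum_comp
      (fun σ : Fin (n+1) → Bool => ∏ i, f i (σ i))]
    rw [Fintype.sum_prod_type]
    have : ∀ (b : Bool) (τ : Fin n → Bool),
        (∏ i, f i ((Fin.consEquiv (fun _ : Fin (n+1) => Bool)) (b, τ) i))
          = f 0 b * ∏ i : Fin n, f i.succ (τ i) := by
      intro b τ
      rw [Fin.prod_univ_succ]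
      simp [Fin.consEquiv]
    simp_rw [this]
    rw [Fin.prod_univ_succ]
    simp only [← Finset.mul_sum, ← Finset.sum_mul]
    rw [ih (fun i => f i.succ)]
    rw [Fintype.sum_bool]

private lemma gibbs_ineq {ι : Type*} [Fintype ι] (ρ x : ι → ℝ)
    (hρ : ∀ s, 0 < ρ s) (hsum : ∑ s, ρ s = 1) :
    ∑ s, ρ s * (x s - Real.log (ρ s)) ≤ Real.log (∑ s, Real.exp (x s)) := by
  set z : ι → ℝ := fun s => Real.exp (x s) / ρ s with hz
  have hzpos : ∀ s, 0 < z s := fun s => div_pos (exp_pos _) (hρ s)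
  have hAG := Real.geom_mean_le_arith_mean_weighted Finset.univ ρ z
    (fun s _ => (hρ s).le) hsum (fun s _ => (hzpos s).le)
  have h1 : ∑ s, ρ s * z s = ∑ s, Real.exp (x s) := by
    refine Finset.sum_congr rfl fun s _ => ?_
    rw [hz, mul_div_assoc']; exact mul_div_cancel_left₀ _ (hρ s).ne'
  have h2 : ∏ s, z s ^ ρ s = Real.exp (∑ s, ρ s * (x s - Real.log (ρ s))) := by
    rw [Real.exp_sum]
    refine Finset.prod_congr rfl fun s _ => ?_
    rw [Real.rpow_def_of_pos (hzpos s), hz]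
    simp only []
    rw [Real.log_div (Real.exp_ne_zero _) (hρ s).ne', Real.log_exp]
    ring_nf
  have hprodpos : 0 < ∏ s, z s ^ ρ s := by rw [h2]; exact exp_pos _
  calc ∑ s, ρ s * (x s - Real.log (ρ s)) = Real.log (∏ s, z s ^ ρ s) := by
        rw [h2, Real.log_exp]
    _ ≤ Real.log (∑ s, Real.exp (x s)) := by
        apply Real.log_le_log hprodpos
        rw [← h1]; exact hAG



section exps
variable {n : ℕ} (w : Fin n → Bool → ℝ) (hw : ∀ i, w i true + w i false = 1)

private lemma exp_const (hw : ∀ i, w i true + w i false = 1) :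
    ∑ σ : Fin n → Bool, ∏ i, w i (σ i) = 1 := by
  rw [sum_prod_pi_bool]
  exact Finset.prod_eq_one fun i _ => hw i

private lemma exp_one (hw : ∀ i, w i true + w i false = 1) (i0 : Fin n) (g : Bool → ℝ) :
    ∑ σ : Fin n → Bool, (∏ i, w i (σ i)) * g (σ i0)
      = w i0 true * g true + w i0 false * g false := by
  have key : ∀ σ : Fin n → Bool, (∏ i, w i (σ i)) * g (σ i0)
      = ∏ i, (fun i (b : Bool) => w i b * (if i = i0 then g b else 1)) i (σ i) := by
    intro σ
    simp only []
    rw [Finset.prod_mul_distrib, Finset.prod_ite_eq' Finset.univ i0 (fun i => g (σ i))]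
    simp
  simp_rw [key]
  rw [sum_prod_pi_bool n (fun i b => w i b * (if i = i0 then g b else 1))]
  rw [Finset.prod_eq_single i0]
  · simp
  · intro i _ hne; simp [hne, hw i]
  · simp

private lemma exp_pair (hw : ∀ i, w i true + w i false = 1) (i0 j0 : Fin n) (hne : i0 ≠ j0)
    (g h : Bool → ℝ) :
    ∑ σ : Fin n → Bool, (∏ i, w i (σ i)) * (g (σ i0) * h (σ j0))
      = (w i0 true * g true + w i0 false * g false)
        * (w j0 true * h true + w j0 false * h false) := by
  have key : ∀ σ : Fin n → Bool, (∏ i, w i (σ i)) * (g (σ i0) * h (σ j0))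
      = ∏ i, (fun i (b : Bool) =>
          w i b * ((if i = i0 then g b else 1) * (if i = j0 then h b else 1))) i (σ i) := by
    intro σ
    simp only []
    rw [Finset.prod_mul_distrib, Finset.prod_mul_distrib,
      Finset.prod_ite_eq' Finset.univ i0 (fun i => g (σ i)),
      Finset.prod_ite_eq' Finset.univ j0 (fun i => h (σ i))]
    simp
  simp_rw [key]
  rw [sum_prod_pi_bool n (fun i b => w i b * ((if i = i0 then g b else 1) * (if i = j0 then h b else 1)))]
  have hfac : ∀ i : Fin n,
      (w i true * ((if i = i0 then g true else 1) * (if i = j0 then h true else 1))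
        + w i false * ((if i = i0 then g false else 1) * (if i = j0 then h false else 1)))
      = (if i = i0 then (w i0 true * g true + w i0 false * g false) else 1)
        * (if i = j0 then (w j0 true * h true + w j0 false * h false) else 1) := by
    intro i
    by_cases h1 : i = i0
    · subst h1
      have h2 : ¬ (i = j0) := hne
      simp [h2]
    · by_cases h2 : i = j0
      · subst h2; simp [h1]
      · simp [h1, h2, hw i]
  rw [Finset.prod_congr rfl (fun i _ => hfac i), Finset.prod_mul_distrib,
    Finset.prod_ite_eq' Finset.univ i0, Finset.prod_ite_eq' Finset.univ j0]
  simp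

private lemma exp_spin (hw : ∀ i, w i true + w i false = 1) (i0 : Fin n) :
    ∑ σ : Fin n → Bool, (∏ i, w i (σ i)) * spin (σ i0) = w i0 true - w i0 false := by
  rw [exp_one w hw i0 spin]; simp [spin]; ring

private lemma exp_spin_pair (hw : ∀ i, w i true + w i false = 1) (i0 j0 : Fin n) :
    ∑ σ : Fin n → Bool, (∏ i, w i (σ i)) * (spin (σ i0) * spin (σ j0))
      = if i0 = j0 then 1 else (w i0 true - w i0 false) * (w j0 true - w j0 false) := by
  by_cases hij : i0 = j0
  · subst hij
    simp only [if_pos rfl]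
    have : ∀ σ : Fin n → Bool, (∏ i, w i (σ i)) * (spin (σ i0) * spin (σ i0))
        = ∏ i, w i (σ i) := by
      intro σ; cases h : σ i0 <;> simp [spin, h]
    simp_rw [this]
    exact exp_const w hw
  · rw [if_neg hij, exp_pair w hw i0 j0 hij spin spin]
    simp [spin]; ring
end exps


private lemma sum_fin_ite (N1 N2 : ℕ) (a b : ℝ) :
    ∑ i : Fin (N1 + N2), (if (i : ℕ) < N1 then a else b) = N1 * a + N2 * b := by
  rw [Fin.sum_univ_eq_sum_range (fun k => if k < N1 then a else b) (N1 + N2)]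
  rw [Finset.range_eq_Ico, ← Finset.sum_Ico_consecutive _ (Nat.zero_le N1) (Nat.le_add_right N1 N2)]
  have h1 : ∑ k ∈ Finset.Ico 0 N1, (if k < N1 then a else b) = N1 * a := by
    rw [Finset.sum_congr rfl (fun k hk => if_pos (Finset.mem_Ico.mp hk).2)]
    simp [mul_comm]
  have h2 : ∑ k ∈ Finset.Ico N1 (N1 + N2), (if k < N1 then a else b) = N2 * b := by
    rw [Finset.sum_congr rfl (fun k hk => if_neg (Nat.not_lt.mpr (Finset.mem_Ico.mp hk).1))]
    simp [mul_comm]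
  rw [h1, h2]

private lemma sum_fin_ite' (N1 N2 : ℕ) (x : ℝ) :
    ∑ i : Fin (N1 + N2), (if N1 ≤ (i : ℕ) then x else 0) = N2 * x := by
  have : ∀ i : Fin (N1 + N2), (if N1 ≤ (i : ℕ) then x else 0)
      = (if (i : ℕ) < N1 then 0 else x) := by
    intro i; by_cases h : (i : ℕ) < N1
    · simp [h, Nat.not_le.mpr h]
    · simp [h, Nat.not_lt.mp h]
  rw [Finset.sum_congr rfl (fun i _ => this i), sum_fin_ite]
  ring

noncomputable def bern (μ : ℝ) (b : Bool) : ℝ := if b then (1 + μ) / 2 else (1 - μ) / 2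

private lemma bern_sum (μ : ℝ) : bern μ true + bern μ false = 1 := by simp [bern]; ring
private lemma bern_spin (μ : ℝ) : bern μ true - bern μ false = μ := by simp [bern]; ring
private lemma bern_pos {μ : ℝ} (h : μ ∈ Set.Ioo (-1:ℝ) 1) (b : Bool) : 0 < bern μ b := by
  cases b <;> simp [bern] <;> [linarith [h.2]; linarith [h.1]]
private lemma bern_ent (μ : ℝ) :
    bern μ true * Real.log (bern μ true) + bern μ false * Real.log (bern μ false)
      = -entI μ := by
  simp [bern, entI]; ring

set_option maxHeartbeats 1000000 in
private lemma key_bound (J11 J12 J22 h1 h2 : ℝ) (hJ11 : 0 < J11) (hJ22 : 0 < J22)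
    (μ1 μ2 : ℝ) (hμ1 : μ1 ∈ Set.Ioo (-1:ℝ) 1) (hμ2 : μ2 ∈ Set.Ioo (-1:ℝ) 1)
    (N1 N2 : ℕ) (hN : 0 < N1 + N2) :
    pLOW J11 J12 J22 h1 h2 ((N1:ℝ)/((N1+N2 : ℕ):ℝ)) μ1 μ2
      ≤ pressure J11 J12 J22 h1 h2 N1 N2 := by
  have hn : (0:ℝ) < ((N1+N2:ℕ):ℝ) := by exact_mod_cast hN
  set w : Fin (N1+N2) → Bool → ℝ :=
    fun i b => if (i:ℕ) < N1 then bern μ1 b else bern μ2 b with hwdef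
  have hw : ∀ i, w i true + w i false = 1 := by
    intro i; by_cases h : (i:ℕ) < N1 <;> simp [hwdef, h, bern_sum]
  have hwpos : ∀ i b, 0 < w i b := by
    intro i b; by_cases h : (i:ℕ) < N1 <;> simp [hwdef, h, bern_pos hμ1 b, bern_pos hμ2 b]
  set ρ : (Fin (N1+N2) → Bool) → ℝ := fun σ => ∏ i, w i (σ i) with hρdef
  have hρpos : ∀ σ, 0 < ρ σ := fun σ => Finset.prod_pos fun i _ => hwpos i _
  have hρsum : ∑ σ, ρ σ = 1 := exp_const w hw
  have hm : ∀ i, w i true - w i false = (if (i:ℕ) < N1 then μ1 else μ2) := by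
    intro i; by_cases h : (i:ℕ) < N1 <;> simp [hwdef, h, bern_spin]
  have hE1 : ∀ i, ∑ σ : Fin (N1+N2) → Bool, ρ σ * spin (σ i)
      = (if (i:ℕ) < N1 then μ1 else μ2) := by
    intro i; rw [hρdef]; rw [exp_spin w hw i, hm i]
  have hE2 : ∀ i j, ∑ σ : Fin (N1+N2) → Bool, ρ σ * (spin (σ i) * spin (σ j))
      = if i = j then 1 else
        (if (i:ℕ) < N1 then μ1 else μ2) * (if (j:ℕ) < N1 then μ1 else μ2) := by
    intro i j; rw [hρdef]; rw [exp_spin_pair w hw i j, hm i, hm j]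
  -- entropy
  have hEnt : ∑ σ : Fin (N1+N2) → Bool, ρ σ * Real.log (ρ σ)
      = (N1:ℝ) * (-entI μ1) + (N2:ℝ) * (-entI μ2) := by
    have hlog : ∀ σ : Fin (N1+N2) → Bool, Real.log (ρ σ) = ∑ i, Real.log (w i (σ i)) :=
      fun σ => Real.log_prod (fun i _ => (hwpos i _).ne')
    calc ∑ σ : Fin (N1+N2) → Bool, ρ σ * Real.log (ρ σ)
        = ∑ σ : Fin (N1+N2) → Bool, ∑ i, ρ σ * Real.log (w i (σ i)) := by
          refine Finset.sum_congr rfl fun σ _ => ?_; rw [hlog σ, Finset.mul_sum]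
      _ = ∑ i, ∑ σ : Fin (N1+N2) → Bool, ρ σ * Real.log (w i (σ i)) := Finset.sum_comm
      _ = ∑ i : Fin (N1+N2), (if (i:ℕ) < N1 then -entI μ1 else -entI μ2) := by
          refine Finset.sum_congr rfl fun i _ => ?_
          rw [hρdef]
          rw [exp_one w hw i (fun b => Real.log (w i b))]
          by_cases h : (i:ℕ) < N1
          · simp only [hwdef, if_pos h]; rw [bern_ent]
          · simp only [hwdef, if_neg h]; rw [bern_ent]
      _ = (N1:ℝ) * (-entI μ1) + (N2:ℝ) * (-entI μ2) := sum_fin_ite N1 N2 _ _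
  -- generic double-sum reduction
  have hred : ∀ (P Q : ℕ → Prop) (_ : DecidablePred P) (_ : DecidablePred Q),
      ∑ σ : Fin (N1+N2) → Bool, ρ σ *
        (∑ i : Fin (N1+N2), ∑ j : Fin (N1+N2), (if P (i:ℕ) ∧ Q (j:ℕ) then spin (σ i) * spin (σ j) else 0))
      = ∑ i : Fin (N1+N2), ∑ j : Fin (N1+N2), (if P (i:ℕ) ∧ Q (j:ℕ) then
          (if i = j then 1 else
            (if (i:ℕ) < N1 then μ1 else μ2) * (if (j:ℕ) < N1 then μ1 else μ2)) else 0) := by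
    intro P Q _ _
    calc ∑ σ : Fin (N1+N2) → Bool, ρ σ *
        (∑ i : Fin (N1+N2), ∑ j : Fin (N1+N2), (if P (i:ℕ) ∧ Q (j:ℕ) then spin (σ i) * spin (σ j) else 0))
        = ∑ i : Fin (N1+N2), ∑ j : Fin (N1+N2), ∑ σ : Fin (N1+N2) → Bool,
            ρ σ * (if P (i:ℕ) ∧ Q (j:ℕ) then spin (σ i) * spin (σ j) else 0) := by
          simp only [Finset.mul_sum]
          rw [Finset.sum_comm]
          exact Finset.sum_congr rfl fun i _ => Finset.sum_comm
      _ = _ := by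
          refine Finset.sum_congr rfl fun i _ => Finset.sum_congr rfl fun j _ => ?_
          by_cases hc : P (i:ℕ) ∧ Q (j:ℕ)
          · simp only [if_pos hc]; exact hE2 i j
          · simp only [if_neg hc, mul_zero, Finset.sum_const_zero]
  -- diagonal collapse helpers
  have hdiagA : ∀ i : Fin (N1+N2), (∑ j : Fin (N1+N2),
      if ((i:ℕ) < N1 ∧ (j:ℕ) < N1) ∧ i = j then 1 - μ1*μ1 else 0)
      = (if (i:ℕ) < N1 then 1 - μ1*μ1 else 0) := by
    intro i
    rw [Finset.sum_eq_single i]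
    · by_cases h : (i:ℕ) < N1 <;> simp [h]
    · intro j _ hji; have hij : ¬ (i = j) := fun h => hji h.symm; simp [hij]
    · intro h; exact absurd (Finset.mem_univ i) h
  have hdiagC : ∀ i : Fin (N1+N2), (∑ j : Fin (N1+N2),
      if (N1 ≤ (i:ℕ) ∧ N1 ≤ (j:ℕ)) ∧ i = j then 1 - μ2*μ2 else 0)
      = (if N1 ≤ (i:ℕ) then 1 - μ2*μ2 else 0) := by
    intro i
    rw [Finset.sum_eq_single i]
    · by_cases h : N1 ≤ (i:ℕ) <;> simp [h]
    · intro j _ hji; have hij : ¬ (i = j) := fun h => hji h.symm; simp [hij]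
    · intro h; exact absurd (Finset.mem_univ i) h
  -- block A
  have hSA : ∑ σ : Fin (N1+N2) → Bool, ρ σ *
      (∑ i : Fin (N1+N2), ∑ j : Fin (N1+N2),
        (if (i:ℕ) < N1 ∧ (j:ℕ) < N1 then spin (σ i) * spin (σ j) else 0))
      = ((N1:ℝ)*μ1) * ((N1:ℝ)*μ1) + (N1:ℝ)*(1 - μ1*μ1) := by
    rw [hred (fun k => k < N1) (fun k => k < N1) inferInstance inferInstance]
    have hsplit : ∀ i j : Fin (N1+N2),
        (if (i:ℕ) < N1 ∧ (j:ℕ) < N1 then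
          (if i = j then 1 else
            (if (i:ℕ) < N1 then μ1 else μ2) * (if (j:ℕ) < N1 then μ1 else μ2)) else 0)
        = (if (i:ℕ) < N1 then μ1 else 0) * (if (j:ℕ) < N1 then μ1 else 0)
          + (if ((i:ℕ) < N1 ∧ (j:ℕ) < N1) ∧ i = j then 1 - μ1*μ1 else 0) := by
      intro i j
      by_cases hc : (i:ℕ) < N1 ∧ (j:ℕ) < N1
      · by_cases hij : i = j
        · simp only [if_pos hc, if_pos hij, if_pos hc.1, if_pos hc.2, if_pos (show _ ∧ i = j from ⟨hc, hij⟩)]; ring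
        · simp only [if_pos hc, if_neg hij, if_pos hc.1, if_pos hc.2,
            if_neg (fun h : ((i:ℕ) < N1 ∧ (j:ℕ) < N1) ∧ i = j => hij h.2), add_zero]
      · rcases not_and_or.mp hc with h | h
        · simp [hc, h]
        · simp [hc, h]
    rw [Finset.sum_congr rfl (fun i _ => Finset.sum_congr rfl (fun j _ => hsplit i j))]
    rw [Finset.sum_congr rfl (fun i _ => Finset.sum_add_distrib), Finset.sum_add_distrib]
    congr 1
    · rw [← Finset.sum_mul_sum]
      rw [show (∑ i : Fin (N1+N2), if (i:ℕ) < N1 then μ1 else 0) = (N1:ℝ)*μ1 by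
        rw [sum_fin_ite]; ring]
    · rw [Finset.sum_congr rfl (fun i _ => hdiagA i), sum_fin_ite]; ring
  -- block C
  have hSC : ∑ σ : Fin (N1+N2) → Bool, ρ σ *
      (∑ i : Fin (N1+N2), ∑ j : Fin (N1+N2),
        (if N1 ≤ (i:ℕ) ∧ N1 ≤ (j:ℕ) then spin (σ i) * spin (σ j) else 0))
      = ((N2:ℝ)*μ2) * ((N2:ℝ)*μ2) + (N2:ℝ)*(1 - μ2*μ2) := by
    rw [hred (fun k => N1 ≤ k) (fun k => N1 ≤ k) inferInstance inferInstance]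
    have hsplit : ∀ i j : Fin (N1+N2),
        (if N1 ≤ (i:ℕ) ∧ N1 ≤ (j:ℕ) then
          (if i = j then 1 else
            (if (i:ℕ) < N1 then μ1 else μ2) * (if (j:ℕ) < N1 then μ1 else μ2)) else 0)
        = (if N1 ≤ (i:ℕ) then μ2 else 0) * (if N1 ≤ (j:ℕ) then μ2 else 0)
          + (if (N1 ≤ (i:ℕ) ∧ N1 ≤ (j:ℕ)) ∧ i = j then 1 - μ2*μ2 else 0) := by
      intro i j
      by_cases hc : N1 ≤ (i:ℕ) ∧ N1 ≤ (j:ℕ)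
      · have hi : ¬ ((i:ℕ) < N1) := Nat.not_lt.mpr hc.1
        have hj : ¬ ((j:ℕ) < N1) := Nat.not_lt.mpr hc.2
        by_cases hij : i = j
        · simp only [if_pos hc, if_pos hij, if_neg hi, if_neg hj, if_pos hc.1, if_pos hc.2,
            if_pos (show _ ∧ i = j from ⟨hc, hij⟩)]; ring
        · simp only [if_pos hc, if_neg hij, if_neg hi, if_neg hj, if_pos hc.1, if_pos hc.2,
            if_neg (fun h : (N1 ≤ (i:ℕ) ∧ N1 ≤ (j:ℕ)) ∧ i = j => hij h.2), add_zero]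
      · rcases not_and_or.mp hc with h | h
        · simp [hc, h]
        · simp [hc, h]
    rw [Finset.sum_congr rfl (fun i _ => Finset.sum_congr rfl (fun j _ => hsplit i j))]
    rw [Finset.sum_congr rfl (fun i _ => Finset.sum_add_distrib), Finset.sum_add_distrib]
    congr 1
    · rw [← Finset.sum_mul_sum]
      rw [show (∑ i : Fin (N1+N2), if N1 ≤ (i:ℕ) then μ2 else 0) = (N2:ℝ)*μ2 from
        sum_fin_ite' N1 N2 μ2]
    · rw [Finset.sum_congr rfl (fun i _ => hdiagC i), sum_fin_ite']
  -- cross block B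
  have hSB : ∑ σ : Fin (N1+N2) → Bool, ρ σ *
      (∑ i : Fin (N1+N2), ∑ j : Fin (N1+N2),
        (if (i:ℕ) < N1 ∧ N1 ≤ (j:ℕ) then spin (σ i) * spin (σ j) else 0))
      = ((N1:ℝ)*μ1) * ((N2:ℝ)*μ2) := by
    rw [hred (fun k => k < N1) (fun k => N1 ≤ k) inferInstance inferInstance]
    have hsplit : ∀ i j : Fin (N1+N2),
        (if (i:ℕ) < N1 ∧ N1 ≤ (j:ℕ) then
          (if i = j then 1 else
            (if (i:ℕ) < N1 then μ1 else μ2) * (if (j:ℕ) < N1 then μ1 else μ2)) else 0)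
        = (if (i:ℕ) < N1 then μ1 else 0) * (if N1 ≤ (j:ℕ) then μ2 else 0) := by
      intro i j
      by_cases hc : (i:ℕ) < N1 ∧ N1 ≤ (j:ℕ)
      · have hj : ¬ ((j:ℕ) < N1) := Nat.not_lt.mpr hc.2
        have hij : ¬ (i = j) := by
          intro h; subst h; exact absurd hc.1 (Nat.not_lt.mpr hc.2)
        simp only [if_pos hc, if_neg hij, if_pos hc.1, if_neg hj, if_pos hc.2]
      · rcases not_and_or.mp hc with h | h
        · simp [hc, h]
        · simp [hc, h]
    rw [Finset.sum_congr rfl (fun i _ => Finset.sum_congr rfl (fun j _ => hsplit i j))]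
    rw [← Finset.sum_mul_sum]
    rw [show (∑ i : Fin (N1+N2), if (i:ℕ) < N1 then μ1 else 0) = (N1:ℝ)*μ1 by
      rw [sum_fin_ite]; ring]
    rw [show (∑ j : Fin (N1+N2), if N1 ≤ (j:ℕ) then μ2 else 0) = (N2:ℝ)*μ2 from
      sum_fin_ite' N1 N2 μ2]
  -- field terms
  have hSD : ∑ σ : Fin (N1+N2) → Bool, ρ σ *
      (∑ i : Fin (N1+N2), (if (i:ℕ) < N1 then spin (σ i) else 0)) = (N1:ℝ)*μ1 := by
    calc ∑ σ : Fin (N1+N2) → Bool, ρ σ *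
          (∑ i : Fin (N1+N2), (if (i:ℕ) < N1 then spin (σ i) else 0))
        = ∑ i : Fin (N1+N2), ∑ σ : Fin (N1+N2) → Bool,
            ρ σ * (if (i:ℕ) < N1 then spin (σ i) else 0) := by
          simp only [Finset.mul_sum]; exact Finset.sum_comm
      _ = ∑ i : Fin (N1+N2), (if (i:ℕ) < N1 then μ1 else 0) := by
          refine Finset.sum_congr rfl fun i _ => ?_
          by_cases h : (i:ℕ) < N1
          · simp only [if_pos h]
            rw [hE1 i, if_pos h]
          · simp only [if_neg h, mul_zero, Finset.sum_const_zero]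
      _ = (N1:ℝ)*μ1 := by rw [sum_fin_ite]; ring
  have hSE : ∑ σ : Fin (N1+N2) → Bool, ρ σ *
      (∑ i : Fin (N1+N2), (if N1 ≤ (i:ℕ) then spin (σ i) else 0)) = (N2:ℝ)*μ2 := by
    calc ∑ σ : Fin (N1+N2) → Bool, ρ σ *
          (∑ i : Fin (N1+N2), (if N1 ≤ (i:ℕ) then spin (σ i) else 0))
        = ∑ i : Fin (N1+N2), ∑ σ : Fin (N1+N2) → Bool,
            ρ σ * (if N1 ≤ (i:ℕ) then spin (σ i) else 0) := by
          simp only [Finset.mul_sum]; exact Finset.sum_comm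
      _ = ∑ i : Fin (N1+N2), (if N1 ≤ (i:ℕ) then μ2 else 0) := by
          refine Finset.sum_congr rfl fun i _ => ?_
          by_cases h : N1 ≤ (i:ℕ)
          · simp only [if_pos h]
            rw [hE1 i, if_neg (Nat.not_lt.mpr h)]
          · simp only [if_neg h, mul_zero, Finset.sum_const_zero]
      _ = (N2:ℝ)*μ2 := sum_fin_ite' N1 N2 μ2
  -- energy expansion
  have hEng : ∑ σ : Fin (N1+N2) → Bool, ρ σ * (-(ham J11 J12 J22 h1 h2 N1 N2 σ))
      = (1/(2*((N1+N2:ℕ):ℝ))) *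
          (J11 * (((N1:ℝ)*μ1) * ((N1:ℝ)*μ1) + (N1:ℝ)*(1 - μ1*μ1))
            + 2*J12 * (((N1:ℝ)*μ1) * ((N2:ℝ)*μ2))
            + J22 * (((N2:ℝ)*μ2) * ((N2:ℝ)*μ2) + (N2:ℝ)*(1 - μ2*μ2)))
        + h1 * ((N1:ℝ)*μ1) + h2 * ((N2:ℝ)*μ2) := by
    have expand : ∀ σ : Fin (N1+N2) → Bool,
        ρ σ * (-(ham J11 J12 J22 h1 h2 N1 N2 σ))
        = (1/(2*((N1+N2:ℕ):ℝ))) * J11 * (ρ σ *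
            (∑ i : Fin (N1+N2), ∑ j : Fin (N1+N2),
              (if (i:ℕ) < N1 ∧ (j:ℕ) < N1 then spin (σ i) * spin (σ j) else 0)))
          + (1/(2*((N1+N2:ℕ):ℝ))) * (2*J12) * (ρ σ *
            (∑ i : Fin (N1+N2), ∑ j : Fin (N1+N2),
              (if (i:ℕ) < N1 ∧ N1 ≤ (j:ℕ) then spin (σ i) * spin (σ j) else 0)))
          + (1/(2*((N1+N2:ℕ):ℝ))) * J22 * (ρ σ *
            (∑ i : Fin (N1+N2), ∑ j : Fin (N1+N2),
              (if N1 ≤ (i:ℕ) ∧ N1 ≤ (j:ℕ) then spin (σ i) * spin (σ j) else 0)))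
          + h1 * (ρ σ * (∑ i : Fin (N1+N2), (if (i:ℕ) < N1 then spin (σ i) else 0)))
          + h2 * (ρ σ * (∑ i : Fin (N1+N2), (if N1 ≤ (i:ℕ) then spin (σ i) else 0))) := by
      intro σ
      simp only [ham]
      field_simp
      ring
    rw [Finset.sum_congr rfl (fun σ _ => expand σ)]
    simp only [Finset.sum_add_distrib, ← Finset.mul_sum]
    rw [hSA, hSB, hSC, hSD, hSE]
    ring
  -- total Gibbs functional
  have hG := gibbs_ineq ρ (fun σ => -(ham J11 J12 J22 h1 h2 N1 N2 σ)) hρpos hρsum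
  have hTot : ∑ σ : Fin (N1+N2) → Bool,
      ρ σ * (-(ham J11 J12 J22 h1 h2 N1 N2 σ) - Real.log (ρ σ))
      = (1/(2*((N1+N2:ℕ):ℝ))) *
          (J11 * (((N1:ℝ)*μ1) * ((N1:ℝ)*μ1) + (N1:ℝ)*(1 - μ1*μ1))
            + 2*J12 * (((N1:ℝ)*μ1) * ((N2:ℝ)*μ2))
            + J22 * (((N2:ℝ)*μ2) * ((N2:ℝ)*μ2) + (N2:ℝ)*(1 - μ2*μ2)))
        + h1 * ((N1:ℝ)*μ1) + h2 * ((N2:ℝ)*μ2)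
        + ((N1:ℝ) * entI μ1 + (N2:ℝ) * entI μ2) := by
    have : ∀ σ : Fin (N1+N2) → Bool,
        ρ σ * (-(ham J11 J12 J22 h1 h2 N1 N2 σ) - Real.log (ρ σ))
        = ρ σ * (-(ham J11 J12 J22 h1 h2 N1 N2 σ)) - ρ σ * Real.log (ρ σ) := by
      intro σ; ring
    rw [Finset.sum_congr rfl (fun σ _ => this σ), Finset.sum_sub_distrib, hEng, hEnt]
    ring
  -- algebraic lower bound by N * pLOW
  have hμ1sq : μ1*μ1 ≤ 1 := by nlinarith [hμ1.1, hμ1.2]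
  have hμ2sq : μ2*μ2 ≤ 1 := by nlinarith [hμ2.1, hμ2.2]
  have hcast : ((N1+N2:ℕ):ℝ) = (N1:ℝ) + (N2:ℝ) := by push_cast; ring
  have hP : ((N1+N2:ℕ):ℝ) * pLOW J11 J12 J22 h1 h2 ((N1:ℝ)/((N1+N2:ℕ):ℝ)) μ1 μ2
      = (1/(2*((N1+N2:ℕ):ℝ))) *
          (J11 * (((N1:ℝ)*μ1) * ((N1:ℝ)*μ1))
            + 2*J12 * (((N1:ℝ)*μ1) * ((N2:ℝ)*μ2))
            + J22 * (((N2:ℝ)*μ2) * ((N2:ℝ)*μ2)))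
        + h1 * ((N1:ℝ)*μ1) + h2 * ((N2:ℝ)*μ2)
        + ((N1:ℝ) * entI μ1 + (N2:ℝ) * entI μ2) := by
    simp only [pLOW]
    rw [hcast]
    have hne : (N1:ℝ) + (N2:ℝ) ≠ 0 := by rw [← hcast]; exact hn.ne'
    field_simp
    ring
  have hineq : ((N1+N2:ℕ):ℝ) * pLOW J11 J12 J22 h1 h2 ((N1:ℝ)/((N1+N2:ℕ):ℝ)) μ1 μ2
      ≤ Real.log (∑ σ : Fin (N1+N2) → Bool,
          Real.exp (-(ham J11 J12 J22 h1 h2 N1 N2 σ))) := by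
    refine le_trans ?_ (le_trans (le_of_eq hTot.symm) hG)
    rw [hP]
    have e1 : 0 ≤ J11*(N1:ℝ)*(1-μ1*μ1) :=
      mul_nonneg (mul_nonneg hJ11.le (Nat.cast_nonneg N1)) (by linarith)
    have e2 : 0 ≤ J22*(N2:ℝ)*(1-μ2*μ2) :=
      mul_nonneg (mul_nonneg hJ22.le (Nat.cast_nonneg N2)) (by linarith)
    have e3 : (0:ℝ) ≤ 1/(2*((N1+N2:ℕ):ℝ)) := by positivity
    nlinarith [mul_nonneg e3 (add_nonneg e1 e2)]
  -- conclude
  simp only [pressure]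
  have h4 : pLOW J11 J12 J22 h1 h2 ((N1:ℝ)/((N1+N2:ℕ):ℝ)) μ1 μ2
      = (1/((N1+N2:ℕ):ℝ)) * (((N1+N2:ℕ):ℝ) *
        pLOW J11 J12 J22 h1 h2 ((N1:ℝ)/((N1+N2:ℕ):ℝ)) μ1 μ2) := by
    rw [one_div, inv_mul_cancel_left₀ hn.ne']
  rw [h4]
  exact mul_le_mul_of_nonneg_left hineq (by positivity)

-- upper bound on pressure
private lemma pressure_le (J11 J12 J22 h1 h2 : ℝ) (N1 N2 : ℕ) (hN : 0 < N1 + N2) :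
    pressure J11 J12 J22 h1 h2 N1 N2
      ≤ Real.log 2 + ((|J11| + 2*|J12| + |J22|)/2 + |h1| + |h2|) := by
  set K : ℝ := (|J11| + 2*|J12| + |J22|)/2 + |h1| + |h2| with hK
  have hn : (0:ℝ) < ((N1+N2:ℕ):ℝ) := by exact_mod_cast hN
  have hham : ∀ σ : Fin (N1+N2) → Bool,
      -(ham J11 J12 J22 h1 h2 N1 N2 σ) ≤ ((N1+N2:ℕ):ℝ) * K := by
    intro σ
    have habs2 : ∀ (P : Fin (N1+N2) → Fin (N1+N2) → Prop)
        (_ : ∀ i j, Decidable (P i j)),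
        |∑ i : Fin (N1+N2), ∑ j : Fin (N1+N2),
          (if P i j then spin (σ i) * spin (σ j) else 0)|
          ≤ ((N1+N2:ℕ):ℝ) * ((N1+N2:ℕ):ℝ) := by
      intro P _
      calc |∑ i : Fin (N1+N2), ∑ j : Fin (N1+N2), (if P i j then spin (σ i) * spin (σ j) else 0)|
          ≤ ∑ i : Fin (N1+N2), |∑ j : Fin (N1+N2), (if P i j then spin (σ i) * spin (σ j) else 0)| :=
            Finset.abs_sum_le_sum_abs _ _
        _ ≤ ∑ i : Fin (N1+N2), ∑ j : Fin (N1+N2), |if P i j then spin (σ i) * spin (σ j) else 0| :=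
            Finset.sum_le_sum fun i _ => Finset.abs_sum_le_sum_abs _ _
        _ ≤ ∑ _i : Fin (N1+N2), ∑ _j : Fin (N1+N2), (1:ℝ) := by
            refine Finset.sum_le_sum fun i _ => Finset.sum_le_sum fun j _ => ?_
            by_cases h : P i j
            · rw [if_pos h]; cases hb : σ i <;> cases hb' : σ j <;> simp [spin]
            · rw [if_neg h]; simp
        _ = ((N1+N2:ℕ):ℝ) * ((N1+N2:ℕ):ℝ) := by
            simp [Finset.sum_const, Finset.card_univ]; ring
    have habs1 : ∀ (P : Fin (N1+N2) → Prop) (_ : ∀ i, Decidable (P i)),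
        |∑ i : Fin (N1+N2), (if P i then spin (σ i) else 0)| ≤ ((N1+N2:ℕ):ℝ) := by
      intro P _
      calc |∑ i : Fin (N1+N2), (if P i then spin (σ i) else 0)|
          ≤ ∑ i : Fin (N1+N2), |if P i then spin (σ i) else 0| := Finset.abs_sum_le_sum_abs _ _
        _ ≤ ∑ _i : Fin (N1+N2), (1:ℝ) := by
            refine Finset.sum_le_sum fun i _ => ?_
            by_cases h : P i
            · rw [if_pos h]; cases hb : σ i <;> simp [spin]
            · rw [if_neg h]; simp
        _ = ((N1+N2:ℕ):ℝ) := by simp [Finset.sum_const, Finset.card_univ]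
    have hA := habs2 (fun i j => (i:ℕ) < N1 ∧ (j:ℕ) < N1) inferInstance
    have hB := habs2 (fun i j => (i:ℕ) < N1 ∧ N1 ≤ (j:ℕ)) inferInstance
    have hC := habs2 (fun i j => N1 ≤ (i:ℕ) ∧ N1 ≤ (j:ℕ)) inferInstance
    have hD := habs1 (fun i => (i:ℕ) < N1) inferInstance
    have hE := habs1 (fun i => N1 ≤ (i:ℕ)) inferInstance
    set n : ℝ := ((N1+N2:ℕ):ℝ)
    set A := ∑ i : Fin (N1+N2), ∑ j : Fin (N1+N2),
      (if (i:ℕ) < N1 ∧ (j:ℕ) < N1 then spin (σ i) * spin (σ j) else 0)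
    set B := ∑ i : Fin (N1+N2), ∑ j : Fin (N1+N2),
      (if (i:ℕ) < N1 ∧ N1 ≤ (j:ℕ) then spin (σ i) * spin (σ j) else 0)
    set C := ∑ i : Fin (N1+N2), ∑ j : Fin (N1+N2),
      (if N1 ≤ (i:ℕ) ∧ N1 ≤ (j:ℕ) then spin (σ i) * spin (σ j) else 0)
    set D := ∑ i : Fin (N1+N2), (if (i:ℕ) < N1 then spin (σ i) else 0)
    set E := ∑ i : Fin (N1+N2), (if N1 ≤ (i:ℕ) then spin (σ i) else 0)
    have hexp : -(ham J11 J12 J22 h1 h2 N1 N2 σ)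
        = (1/(2*n)) * (J11 * A + 2*J12*B + J22*C) + h1 * D + h2 * E := by
      simp only [ham]; ring
    rw [hexp, hK]
    have l1 : J11 * A ≤ |J11| * (n*n) := by
      calc J11 * A ≤ |J11 * A| := le_abs_self _
        _ = |J11| * |A| := abs_mul _ _
        _ ≤ |J11| * (n*n) := mul_le_mul_of_nonneg_left hA (abs_nonneg _)
    have l2 : 2*J12 * B ≤ 2*|J12| * (n*n) := by
      calc 2*J12 * B ≤ |2*J12 * B| := le_abs_self _
        _ = 2*|J12| * |B| := by rw [abs_mul, abs_mul]; simp
        _ ≤ 2*|J12| * (n*n) := by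
            apply mul_le_mul_of_nonneg_left hB; positivity
    have l3 : J22 * C ≤ |J22| * (n*n) := by
      calc J22 * C ≤ |J22 * C| := le_abs_self _
        _ = |J22| * |C| := abs_mul _ _
        _ ≤ |J22| * (n*n) := mul_le_mul_of_nonneg_left hC (abs_nonneg _)
    have l4 : h1 * D ≤ |h1| * n := by
      calc h1 * D ≤ |h1 * D| := le_abs_self _
        _ = |h1| * |D| := abs_mul _ _
        _ ≤ |h1| * n := mul_le_mul_of_nonneg_left hD (abs_nonneg _)
    have l5 : h2 * E ≤ |h2| * n := by
      calc h2 * E ≤ |h2 * E| := le_abs_self _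
        _ = |h2| * |E| := abs_mul _ _
        _ ≤ |h2| * n := mul_le_mul_of_nonneg_left hE (abs_nonneg _)
    have hc : (0:ℝ) < 1/(2*n) := by positivity
    have hsum : J11 * A + 2*J12*B + J22*C ≤ (|J11| + 2*|J12| + |J22|) * (n*n) := by
      nlinarith [l1, l2, l3]
    calc (1/(2*n)) * (J11 * A + 2*J12*B + J22*C) + h1 * D + h2 * E
        ≤ (1/(2*n)) * ((|J11| + 2*|J12| + |J22|) * (n*n)) + |h1| * n + |h2| * n := by
          have := mul_le_mul_of_nonneg_left hsum hc.le
          linarith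
      _ = n * ((|J11| + 2*|J12| + |J22|)/2 + |h1| + |h2|) := by
          field_simp
  -- sum bound
  have hcard : (Fintype.card (Fin (N1+N2) → Bool) : ℝ) = 2^(N1+N2) := by
    simp [Fintype.card_fun]
  have hZ : ∑ σ : Fin (N1+N2) → Bool, Real.exp (-(ham J11 J12 J22 h1 h2 N1 N2 σ))
      ≤ 2^(N1+N2) * Real.exp (((N1+N2:ℕ):ℝ) * K) := by
    calc ∑ σ : Fin (N1+N2) → Bool, Real.exp (-(ham J11 J12 J22 h1 h2 N1 N2 σ))
        ≤ ∑ _σ : Fin (N1+N2) → Bool, Real.exp (((N1+N2:ℕ):ℝ) * K) :=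
          Finset.sum_le_sum fun σ _ => Real.exp_le_exp.mpr (hham σ)
      _ = 2^(N1+N2) * Real.exp (((N1+N2:ℕ):ℝ) * K) := by
          rw [Finset.sum_const, Finset.card_univ]
          rw [nsmul_eq_mul, ← hcard]
  have hZpos : (0:ℝ) < ∑ σ : Fin (N1+N2) → Bool, Real.exp (-(ham J11 J12 J22 h1 h2 N1 N2 σ)) :=
    Finset.sum_pos (fun σ _ => Real.exp_pos _) ⟨fun _ => true, Finset.mem_univ _⟩
  simp only [pressure]
  have hlog : Real.log (∑ σ : Fin (N1+N2) → Bool, Real.exp (-(ham J11 J12 J22 h1 h2 N1 N2 σ)))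
      ≤ ((N1+N2:ℕ):ℝ) * (Real.log 2 + K) := by
    calc Real.log (∑ σ : Fin (N1+N2) → Bool, Real.exp (-(ham J11 J12 J22 h1 h2 N1 N2 σ)))
        ≤ Real.log (2^(N1+N2) * Real.exp (((N1+N2:ℕ):ℝ) * K)) := Real.log_le_log hZpos hZ
      _ = ((N1+N2:ℕ):ℝ) * (Real.log 2 + K) := by
          rw [Real.log_mul (by positivity) (Real.exp_ne_zero _), Real.log_pow, Real.log_exp]
          push_cast; ring
  calc (1 / ((N1+N2:ℕ):ℝ)) * Real.log (∑ σ : Fin (N1+N2) → Bool,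
          Real.exp (-(ham J11 J12 J22 h1 h2 N1 N2 σ)))
      ≤ (1 / ((N1+N2:ℕ):ℝ)) * (((N1+N2:ℕ):ℝ) * (Real.log 2 + K)) :=
        mul_le_mul_of_nonneg_left hlog (by positivity)
    _ = Real.log 2 + K := by
        rw [one_div, inv_mul_cancel_left₀ hn.ne']

private lemma continuous_entI : Continuous entI := by
  have h := Real.continuous_mul_log
  have hrw : entI = fun μ => -(((1 + μ) / 2) * Real.log ((1 + μ) / 2))
      - (((1 - μ) / 2) * Real.log ((1 - μ) / 2)) := by
    funext μ; simp only [entI]; ring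
  rw [hrw]
  have c1 : Continuous fun μ : ℝ => (1 + μ) / 2 := by fun_prop
  have c2 : Continuous fun μ : ℝ => (1 - μ) / 2 := by fun_prop
  exact ((h.comp c1).neg).sub (h.comp c2)

private lemma tendsto_ratio {α : ℝ} (hα : α ∈ Set.Ioo (0:ℝ) 1) :
    Tendsto (fun N : ℕ => (⌊α * (N:ℝ)⌋₊ : ℝ) / (N:ℝ)) atTop (nhds α) := by
  have hlow : Tendsto (fun N : ℕ => α - 1 / (N:ℝ)) atTop (nhds α) := by
    have h1 := tendsto_one_div_atTop_nhds_zero_nat (𝕜 := ℝ)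
    have h2 := ((tendsto_const_nhds : Tendsto (fun _ : ℕ => α) atTop (nhds α)).sub h1)
    simpa using h2
  refine tendsto_of_tendsto_of_tendsto_of_le_of_le' hlow tendsto_const_nhds ?_ ?_
  · filter_upwards [eventually_ge_atTop 1] with N hN
    have hNpos : (0:ℝ) < (N:ℝ) := by exact_mod_cast hN
    rw [sub_le_iff_le_add, ← add_div, le_div_iff₀ hNpos]
    have := Nat.lt_floor_add_one (α * (N:ℝ))
    linarith
  · filter_upwards [eventually_ge_atTop 1] with N hN
    have hNpos : (0:ℝ) < (N:ℝ) := by exact_mod_cast hN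
    rw [div_le_iff₀ hNpos]
    exact Nat.floor_le (mul_nonneg hα.1.le (Nat.cast_nonneg N))

set_option maxHeartbeats 1000000 in
private lemma interior_le (J11 J12 J22 h1 h2 α : ℝ) (hJ11 : 0 < J11) (hJ22 : 0 < J22)
    (hα : α ∈ Set.Ioo (0:ℝ) 1) (μ1 μ2 : ℝ)
    (hμ1 : μ1 ∈ Set.Ioo (-1:ℝ) 1) (hμ2 : μ2 ∈ Set.Ioo (-1:ℝ) 1) :
    pLOW J11 J12 J22 h1 h2 α μ1 μ2 ≤
      Filter.liminf
        (fun N : ℕ =>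
          pressure J11 J12 J22 h1 h2 ⌊α * (N : ℝ)⌋₊ (N - ⌊α * (N : ℝ)⌋₊))
        Filter.atTop := by
  have hgL : Tendsto (fun N : ℕ => pLOW J11 J12 J22 h1 h2 ((⌊α*(N:ℝ)⌋₊:ℝ)/(N:ℝ)) μ1 μ2)
      atTop (nhds (pLOW J11 J12 J22 h1 h2 α μ1 μ2)) := by
    have hc : Continuous fun r : ℝ => pLOW J11 J12 J22 h1 h2 r μ1 μ2 := by
      have h := continuous_entI
      simp only [pLOW]; fun_prop
    have := (hc.tendsto α).comp (tendsto_ratio hα)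
    exact this
  have hglep : ∀ᶠ N : ℕ in atTop,
      pLOW J11 J12 J22 h1 h2 ((⌊α*(N:ℝ)⌋₊:ℝ)/(N:ℝ)) μ1 μ2
        ≤ pressure J11 J12 J22 h1 h2 ⌊α * (N : ℝ)⌋₊ (N - ⌊α * (N : ℝ)⌋₊) := by
    filter_upwards [eventually_ge_atTop 1] with N hN
    have hfl : ⌊α*(N:ℝ)⌋₊ ≤ N := by
      calc ⌊α*(N:ℝ)⌋₊ ≤ ⌊(N:ℝ)⌋₊ :=
            Nat.floor_le_floor (by nlinarith [hα.2.le, (Nat.cast_nonneg N : (0:ℝ) ≤ (N:ℝ))])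
        _ = N := Nat.floor_natCast N
    have hsum : ⌊α*(N:ℝ)⌋₊ + (N - ⌊α*(N:ℝ)⌋₊) = N := Nat.add_sub_cancel' hfl
    have hNpos : 0 < ⌊α*(N:ℝ)⌋₊ + (N - ⌊α*(N:ℝ)⌋₊) := by omega
    have hkey := key_bound J11 J12 J22 h1 h2 hJ11 hJ22 μ1 μ2 hμ1 hμ2
      ⌊α*(N:ℝ)⌋₊ (N - ⌊α*(N:ℝ)⌋₊) hNpos
    have hcast : ((⌊α*(N:ℝ)⌋₊ + (N - ⌊α*(N:ℝ)⌋₊) : ℕ):ℝ) = (N:ℝ) := by rw [hsum]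
    rw [hcast] at hkey
    exact hkey
  have hpub : ∀ᶠ N : ℕ in atTop,
      pressure J11 J12 J22 h1 h2 ⌊α * (N : ℝ)⌋₊ (N - ⌊α * (N : ℝ)⌋₊)
        ≤ Real.log 2 + ((|J11| + 2*|J12| + |J22|)/2 + |h1| + |h2|) := by
    filter_upwards [eventually_ge_atTop 1] with N hN
    exact pressure_le J11 J12 J22 h1 h2 _ _ (by omega)
  have hcob : IsCoboundedUnder (· ≥ ·) atTop
      (fun N : ℕ => pressure J11 J12 J22 h1 h2 ⌊α * (N : ℝ)⌋₊ (N - ⌊α * (N : ℝ)⌋₊)) :=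
    isCoboundedUnder_ge_of_eventually_le atTop hpub
  have hbdd : IsBoundedUnder (· ≥ ·) atTop
      (fun N : ℕ => pLOW J11 J12 J22 h1 h2 ((⌊α*(N:ℝ)⌋₊:ℝ)/(N:ℝ)) μ1 μ2) :=
    hgL.isBoundedUnder_ge
  calc pLOW J11 J12 J22 h1 h2 α μ1 μ2
      = liminf (fun N : ℕ => pLOW J11 J12 J22 h1 h2 ((⌊α*(N:ℝ)⌋₊:ℝ)/(N:ℝ)) μ1 μ2) atTop :=
        (hgL.liminf_eq).symm
    _ ≤ _ := liminf_le_liminf hglep hbdd hcob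


set_option maxHeartbeats 1000000 in
/-- lower bound for the limiting pressure. -/
theorem pressure_liminf_ge_sup_pLOW
    (J11 J12 J22 h1 h2 α : ℝ) (hJ11 : 0 < J11) (hJ22 : 0 < J22)
    (hα : α ∈ Set.Ioo (0 : ℝ) 1) :
    Filter.liminf
      (fun N : ℕ =>
        pressure J11 J12 J22 h1 h2 ⌊α * (N : ℝ)⌋₊ (N - ⌊α * (N : ℝ)⌋₊))
      Filter.atTop ≥
      sSup ((fun μ : ℝ × ℝ => pLOW J11 J12 J22 h1 h2 α μ.1 μ.2) ''
        (Set.Icc (-1 : ℝ) 1 ×ˢ Set.Icc (-1 : ℝ) 1)) := by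
  rw [ge_iff_le]
  refine csSup_le ?_ ?_
  · exact ⟨pLOW J11 J12 J22 h1 h2 α 0 0,
      ⟨((0:ℝ), (0:ℝ)), Set.mem_prod.mpr
        ⟨Set.mem_Icc.mpr (by norm_num), Set.mem_Icc.mpr (by norm_num)⟩, rfl⟩⟩
  · rintro x ⟨⟨μ1, μ2⟩, hmem, rfl⟩
    have hμ1 : μ1 ∈ Set.Icc (-1:ℝ) 1 := hmem.1
    have hμ2 : μ2 ∈ Set.Icc (-1:ℝ) 1 := hmem.2
    have hcont : Continuous fun t : ℝ => pLOW J11 J12 J22 h1 h2 α (t*μ1) (t*μ2) := by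
      have h := continuous_entI
      simp only [pLOW]
      fun_prop
    have hev : ∀ᶠ t in nhdsWithin (1:ℝ) (Set.Iio 1),
        pLOW J11 J12 J22 h1 h2 α (t*μ1) (t*μ2) ≤
          Filter.liminf
            (fun N : ℕ =>
              pressure J11 J12 J22 h1 h2 ⌊α * (N : ℝ)⌋₊ (N - ⌊α * (N : ℝ)⌋₊))
            Filter.atTop := by
      filter_upwards [Ioo_mem_nhdsLT_of_mem
        (show (1:ℝ) ∈ Set.Ioc (0:ℝ) 1 by norm_num)] with t ht
      refine interior_le J11 J12 J22 h1 h2 α hJ11 hJ22 hα (t*μ1) (t*μ2) ?_ ?_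
      · constructor
        · nlinarith [hμ1.1, hμ1.2, ht.1, ht.2]
        · nlinarith [hμ1.1, hμ1.2, ht.1, ht.2]
      · constructor
        · nlinarith [hμ2.1, hμ2.2, ht.1, ht.2]
        · nlinarith [hμ2.1, hμ2.2, ht.1, ht.2]
    have htends : Tendsto (fun t : ℝ => pLOW J11 J12 J22 h1 h2 α (t*μ1) (t*μ2))
        (nhdsWithin (1:ℝ) (Set.Iio 1)) (nhds (pLOW J11 J12 J22 h1 h2 α μ1 μ2)) := by
      have h0 := (hcont.tendsto (1:ℝ)).mono_left (nhdsWithin_le_nhds (s := Set.Iio 1))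
      simpa using h0
    exact le_of_tendsto htends hev
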